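/- arXiv:1311.3473 — 3 statements merged into one kernel-verified Lean document; each statement's English description precedes it below -/
import Mathlib

section
/- Let μ be a positive measure on ℂ with support contained in the closed unit disk, and let M(μ) = (c_{i,j})_{i,j∈ℕ} with c_{i,j} = ∫ z^i conj(z)^j dμ be its moment matrix. Then the following are equivalent: (1) μ(𝕋) = 0, i.e. the restriction of μ to the unit circle is zero; (2) M(μ) is weakly asymptotic Toeplitz with all diagonal limits zero, i.e. for every k ∈ ℤ, lim_{n→∞} c_{n,n+k} = 0; (3) lim_{n→∞} c_{n,n} = 0. -/
open MeasureTheory Filter Matrix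
open scoped ComplexOrder Topology

noncomputable section

/-- The `(n+1) × (n+1)` leading principal truncation of an infinite matrix. -/
def trunc (M : ℕ → ℕ → ℂ) (n : ℕ) : Matrix (Fin (n + 1)) (Fin (n + 1)) ℂ :=
  Matrix.of fun i j => M i j

/-- An infinite matrix is Hermitian positive definite (HPD) if every leading principal
truncation is positive definite (equivalently, it is Hermitian and all leading
principal minors are positive). -/
def IsHPD (M : ℕ → ℕ → ℂ) : Prop := ∀ n, (trunc M n).PosDef

/-- The smallest eigenvalue of the truncation `M_n`, as the minimum of the Rayleigh
quotient `v M_n v^* / (v v^*)` over nonzero `v ∈ ℂ^{n+1}`. -/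
def smallestEig (M : ℕ → ℕ → ℂ) (n : ℕ) : ℝ :=
  ⨅ v : {v : Fin (n + 1) → ℂ // v ≠ 0},
    (∑ i : Fin (n + 1), ∑ j : Fin (n + 1), v.1 i * M i j * (starRingEnd ℂ) (v.1 j)).re / ∑ i, Complex.normSq (v.1 i)

/-- `B` is the transition matrix of `M`: upper triangular, positive diagonal,
with `B_nᵗ M_n conj(B_n) = I` for all `n`. -/
def IsTransition (M B : ℕ → ℕ → ℂ) : Prop :=
  (∀ k n, n < k → B k n = 0) ∧
  (∀ n, 0 < (B n n).re ∧ (B n n).im = 0) ∧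
  (∀ n, (trunc B n)ᵀ * trunc M n * (trunc B n).map (starRingEnd ℂ) = 1)

/-- Operator norm of a finite matrix acting on the Euclidean space `ℂ^n`. -/
def opNorm {n : ℕ} (A : Matrix (Fin n) (Fin n) ℂ) : ℝ :=
  ‖LinearMap.toContinuousLinearMap (Matrix.toEuclideanLin A)‖


/-- The moment matrix of a measure on `ℂ`. -/
def momMat (μ : Measure ℂ) : ℕ → ℕ → ℂ :=
  fun i j => ∫ z, z ^ i * (starRingEnd ℂ) z ^ j ∂μ

/-- for a measure `μ` supported in the closed unit disk with moment
matrix `(c_{i,j})`, the following are equivalent: (1) `μ(𝕋) = 0`; (2) for every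
`k ∈ ℤ`, `lim_n c_{n,n+k} = 0`; (3) `lim_n c_{n,n} = 0`. -/
theorem stmt17 (μ : Measure ℂ) [IsFiniteMeasure μ]
    (hsupp : μ ((Metric.closedBall (0 : ℂ) 1)ᶜ) = 0) :
    (μ (Metric.sphere (0 : ℂ) 1) = 0 ↔
      ∀ k : ℤ, Tendsto (fun n : ℕ => momMat μ n ((n : ℤ) + k).toNat) atTop (𝓝 0)) ∧
    ((∀ k : ℤ, Tendsto (fun n : ℕ => momMat μ n ((n : ℤ) + k).toNat) atTop (𝓝 0)) ↔
      Tendsto (fun n : ℕ => momMat μ n n) atTop (𝓝 0)) := by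
  have hae : ∀ᵐ z ∂μ, ‖z‖ ≤ 1 := by
    have h0 : ∀ᵐ z ∂μ, z ∈ Metric.closedBall (0:ℂ) 1 := by
      rw [ae_iff]; exact hsupp
    filter_upwards [h0] with z hz
    simpa [Metric.mem_closedBall, dist_zero_right] using hz
  have hF : Tendsto (fun m : ℕ => ∫ z, ‖z‖ ^ m ∂μ) atTop
      (𝓝 ((μ (Metric.sphere (0:ℂ) 1)).toReal)) := by
    have hlim : Tendsto (fun m : ℕ => ∫ z, ‖z‖ ^ m ∂μ) atTop
        (𝓝 (∫ z, (Metric.sphere (0:ℂ) 1).indicator (fun _ => (1:ℝ)) z ∂μ)) := by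
      refine tendsto_integral_of_dominated_convergence (fun _ => (1:ℝ))
        (fun m => ?_) (integrable_const 1) (fun m => ?_) ?_
      · exact (continuous_norm.pow m).aestronglyMeasurable
      · filter_upwards [hae] with z hz
        simpa [abs_of_nonneg (pow_nonneg (norm_nonneg z) m)] using
          pow_le_one₀ (norm_nonneg z) hz
      · filter_upwards [hae] with z hz
        rcases eq_or_lt_of_le hz with h1 | h1
        · have hmem : z ∈ Metric.sphere (0:ℂ) 1 := by
            simp [Metric.mem_sphere, dist_zero_right, h1]
          simp [Set.indicator_of_mem hmem, h1]
        · have hmem : z ∉ Metric.sphere (0:ℂ) 1 := by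
            simp [Metric.mem_sphere, dist_zero_right]
            exact ne_of_lt h1
          rw [Set.indicator_of_notMem hmem]
          exact tendsto_pow_atTop_nhds_zero_of_lt_one (norm_nonneg z) h1
    rwa [integral_indicator_const _ Metric.isClosed_sphere.measurableSet,
      smul_eq_mul, mul_one] at hlim
  have hdiag : ∀ n : ℕ, momMat μ n n = ((∫ z, ‖z‖ ^ (2*n) ∂μ : ℝ) : ℂ) := by
    intro n
    calc momMat μ n n = ∫ z, ((‖z‖ ^ (2*n) : ℝ) : ℂ) ∂μ := by
          refine integral_congr_ae (Eventually.of_forall fun z => ?_)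
          have hns : Complex.normSq z = ‖z‖ ^ 2 := by
            rw [Complex.normSq_eq_norm_sq]
          show z ^ n * (starRingEnd ℂ) z ^ n = _
          rw [← mul_pow, Complex.mul_conj, hns]
          push_cast
          ring
      _ = ((∫ z, ‖z‖ ^ (2*n) ∂μ : ℝ) : ℂ) := integral_ofReal
  have hbound : ∀ n m : ℕ, ‖momMat μ n m‖ ≤ ∫ z, ‖z‖ ^ (n + m) ∂μ := by
    intro n m
    calc ‖momMat μ n m‖ ≤ ∫ z, ‖z ^ n * (starRingEnd ℂ) z ^ m‖ ∂μ :=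
          norm_integral_le_integral_norm _
      _ = ∫ z, ‖z‖ ^ (n + m) ∂μ := by
          refine integral_congr_ae (Eventually.of_forall fun z => ?_)
          simp [pow_add, norm_mul, norm_pow]
  have h1 : μ (Metric.sphere (0:ℂ) 1) = 0 →
      ∀ k : ℤ, Tendsto (fun n : ℕ => momMat μ n ((n : ℤ) + k).toNat) atTop (𝓝 0) := by
    intro hμ k
    have hF0 : Tendsto (fun m : ℕ => ∫ z, ‖z‖ ^ m ∂μ) atTop (𝓝 0) := by
      simpa [hμ] using hF
    rw [tendsto_zero_iff_norm_tendsto_zero]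
    have hup : Tendsto (fun n : ℕ => ∫ z, ‖z‖ ^ (n + ((n:ℤ)+k).toNat) ∂μ) atTop (𝓝 0) :=
      hF0.comp (tendsto_atTop_mono (fun n => Nat.le_add_right n _) tendsto_id)
    exact squeeze_zero (fun n => norm_nonneg _) (fun n => hbound n _) hup
  have h3 : (∀ k : ℤ, Tendsto (fun n : ℕ => momMat μ n ((n : ℤ) + k).toNat) atTop (𝓝 0)) →
      Tendsto (fun n : ℕ => momMat μ n n) atTop (𝓝 0) := by
    intro h
    simpa using h 0
  have h2 : Tendsto (fun n : ℕ => momMat μ n n) atTop (𝓝 0) →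
      μ (Metric.sphere (0:ℂ) 1) = 0 := by
    intro h
    have hre : Tendsto (fun n : ℕ => ∫ z, ‖z‖ ^ (2*n) ∂μ) atTop (𝓝 0) := by
      have := (Complex.continuous_re.tendsto 0).comp h
      simpa [Function.comp_def, hdiag] using this
    have h2n : Tendsto (fun n : ℕ => ∫ z, ‖z‖ ^ (2*n) ∂μ) atTop
        (𝓝 ((μ (Metric.sphere (0:ℂ) 1)).toReal)) :=
      hF.comp (tendsto_atTop_mono (fun n => Nat.le_mul_of_pos_left n two_pos) tendsto_id)
    have h0 : (μ (Metric.sphere (0:ℂ) 1)).toReal = 0 := tendsto_nhds_unique h2n hre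
    exact ((ENNReal.toReal_eq_zero_iff _).mp h0).resolve_right (measure_ne_top μ _)
  exact ⟨⟨fun h => h1 h, fun h => h2 (h3 h)⟩, ⟨h3, fun h => h1 (h2 h)⟩⟩
end
end

section
/- Let μ be a positive measure on ℂ with support contained in the closed unit disk, let M(μ) = (c_{i,j}) with c_{i,j} = ∫ z^i conj(z)^j dμ be its moment matrix, and let ν be the restriction of μ to the unit circle 𝕋. Then M(μ) is a weakly asymptotic Toeplitz matrix and Lim(M(μ)) = T(ν); explicitly, for every k ∈ ℤ, lim_{n→∞} c_{n,n+k} = ∫_𝕋 conj(z)^k dν(z). -/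
open MeasureTheory Filter Matrix
open scoped ComplexOrder Topology

noncomputable section

/-- for a measure `μ` supported in the closed unit disk with moment
matrix `(c_{i,j})` and `ν = μ|_𝕋`, the matrix `M(μ)` is weakly asymptotic Toeplitz
with `Lim(M(μ)) = T(ν)`: for every `k ∈ ℤ`,
`lim_n c_{n,n+k} = ∫_𝕋 conj(z)^k dν`. -/
theorem stmt18 (μ : Measure ℂ) [IsFiniteMeasure μ]
    (hsupp : μ ((Metric.closedBall (0 : ℂ) 1)ᶜ) = 0) :
    ∀ k : ℤ, Tendsto (fun n : ℕ => momMat μ n ((n : ℤ) + k).toNat) atTop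
      (𝓝 (∫ z, (starRingEnd ℂ) z ^ k ∂(μ.restrict (Metric.sphere (0 : ℂ) 1)))) := by
  intro k
  have hae : ∀ᵐ z ∂μ, ‖z‖ ≤ 1 := by
    rw [ae_iff]
    convert hsupp using 2
    ext z
    simp [Metric.mem_closedBall, Complex.dist_eq, not_le]
  have hint : (∫ z, (starRingEnd ℂ) z ^ k ∂(μ.restrict (Metric.sphere (0 : ℂ) 1)))
      = ∫ z, (Metric.sphere (0:ℂ) 1).indicator (fun z => (starRingEnd ℂ) z ^ k) z ∂μ := by
    rw [MeasureTheory.integral_indicator Metric.isClosed_sphere.measurableSet]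
  rw [hint]
  unfold momMat
  apply MeasureTheory.tendsto_integral_of_dominated_convergence (fun _ => (1:ℝ))
  · intro n
    exact (Continuous.mul (continuous_pow n)
      ((Complex.continuous_conj.pow _))).aestronglyMeasurable
  · exact integrable_const 1
  · intro n
    filter_upwards [hae] with z hz
    have : ‖z ^ n * (starRingEnd ℂ) z ^ ((n : ℤ) + k).toNat‖
        = ‖z‖ ^ n * ‖z‖ ^ ((n : ℤ) + k).toNat := by
      rw [norm_mul, norm_pow, norm_pow, RCLike.norm_conj]
    rw [this]
    exact mul_le_one₀ (pow_le_one₀ (norm_nonneg z) hz)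
      (pow_nonneg (norm_nonneg z) _) (pow_le_one₀ (norm_nonneg z) hz)
  · filter_upwards [hae] with z hz
    rcases eq_or_lt_of_le hz with h1 | hlt
    · -- on the sphere
      have hzsph : z ∈ Metric.sphere (0:ℂ) 1 := by
        simp [Metric.mem_sphere, Complex.dist_eq, h1.symm]
      rw [Set.indicator_of_mem hzsph]
      have hz0 : z ≠ 0 := by
        intro h; rw [h] at h1; simp at h1
      have hw : (starRingEnd ℂ) z ≠ 0 := by
        intro h
        exact hz0 (by simpa using congrArg (starRingEnd ℂ) h)
      have hzw : z * (starRingEnd ℂ) z = 1 := by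
        rw [Complex.mul_conj]
        norm_cast
        rw [Complex.normSq_eq_norm_sq, h1]
        norm_num
      apply Tendsto.congr' _ tendsto_const_nhds
      filter_upwards [eventually_ge_atTop (-k).toNat] with n hn
      have hnk : (0:ℤ) ≤ (n:ℤ) + k := by
        have : -k ≤ ((-k).toNat : ℤ) := Int.self_le_toNat _
        omega
      have h2 : ((((n:ℤ) + k).toNat : ℤ)) = (n:ℤ) + k := Int.toNat_of_nonneg hnk
      calc (starRingEnd ℂ) z ^ k
          = 1 ^ n * (starRingEnd ℂ) z ^ k := by rw [one_pow, one_mul]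
        _ = (z * (starRingEnd ℂ) z) ^ n * (starRingEnd ℂ) z ^ k := by rw [hzw]
        _ = z ^ n * ((starRingEnd ℂ) z ^ (n:ℤ) * (starRingEnd ℂ) z ^ k) := by
            rw [mul_pow, zpow_natCast, mul_assoc]
        _ = z ^ n * (starRingEnd ℂ) z ^ ((n:ℤ) + k) := by rw [← zpow_add₀ hw]
        _ = z ^ n * (starRingEnd ℂ) z ^ ((n:ℤ) + k).toNat := by
            congr 1
            conv_rhs => rw [← zpow_natCast, h2]
    · -- inside the open disk
      have hzsph : z ∉ Metric.sphere (0:ℂ) 1 := by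
        simp [Metric.mem_sphere, Complex.dist_eq]
        exact ne_of_lt hlt
      rw [Set.indicator_of_notMem hzsph]
      rw [tendsto_zero_iff_norm_tendsto_zero]
      apply squeeze_zero (fun n => norm_nonneg _) (g := fun n => ‖z‖ ^ n)
      · intro n
        rw [norm_mul, norm_pow, norm_pow, RCLike.norm_conj]
        exact mul_le_of_le_one_right (pow_nonneg (norm_nonneg z) _)
          (pow_le_one₀ (norm_nonneg z) hz)
      · exact tendsto_pow_atTop_nhds_zero_of_lt_one (norm_nonneg z) hlt
end
end

section
/- Let μ be a positive measure on ℂ with all moments finite whose moment matrix M(μ) = (∫ z^i conj(z)^j dμ)_{i,j∈ℕ} defines a compact operator on ℓ² (i.e. the map x ↦ M(μ)x is well defined on ℓ² and is a compact linear operator). Then μ(𝕋) = 0, i.e. the restriction of μ to the unit circle is the zero measure. -/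
open MeasureTheory Filter Matrix
open scoped ComplexOrder Topology

noncomputable section

lemma momMat_diag (μ : Measure ℂ) (n : ℕ) :
    momMat μ n n = ((∫ z, ‖z‖ ^ (2 * n) ∂μ : ℝ) : ℂ) := by
  have h : ∀ z : ℂ, z ^ n * (starRingEnd ℂ) z ^ n = ((‖z‖ ^ (2 * n) : ℝ) : ℂ) := by
    intro z
    rw [← mul_pow, Complex.mul_conj]
    push_cast
    rw [Complex.normSq_eq_norm_sq, pow_mul]
    norm_num [Complex.norm_def]
  simp only [momMat, h]
  exact integral_ofReal

/-- if the moment matrix of a measure `μ` on `ℂ` (with all moments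
finite) defines a compact operator on `ℓ²`, then `μ(𝕋) = 0`. -/
theorem stmt19 (μ : Measure ℂ)
    (hmom : ∀ n : ℕ, Integrable (fun z => ‖z‖ ^ n) μ)
    (hcompact : ∃ K : lp (fun _ : ℕ => ℂ) 2 →L[ℂ] lp (fun _ : ℕ => ℂ) 2,
      IsCompactOperator (K : lp (fun _ : ℕ => ℂ) 2 → lp (fun _ : ℕ => ℂ) 2) ∧
      ∀ (x : lp (fun _ : ℕ => ℂ) 2) (i : ℕ),
        HasSum (fun j => momMat μ i j * x j) (K x i)) :
    μ (Metric.sphere (0 : ℂ) 1) = 0 := by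
  obtain ⟨K, hKc, hKsum⟩ := hcompact
  have h1 : Integrable (fun _ : ℂ => (1 : ℝ)) μ := by simpa using hmom 0
  have hfin : μ Set.univ < ⊤ := by
    rcases integrable_const_iff.mp h1 with h | h
    · exact absurd h one_ne_zero
    · exact h.measure_univ_lt_top
  -- the "standard basis" sequence
  set e : ℕ → lp (fun _ : ℕ => ℂ) 2 := fun n => lp.single 2 n (1 : ℂ) with he
  have hnorm_e : ∀ n, ‖e n‖ = 1 := by
    intro n
    have := lp.norm_single (E := fun _ : ℕ => ℂ) (p := 2) (by norm_num) n (1:ℂ)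
    simpa [he] using this
  -- diagonal entries appear as values of K
  have hdiag : ∀ n, (K (e n) : ∀ _ : ℕ, ℂ) n = momMat μ n n := by
    intro n
    have h2 := hKsum (e n) n
    have h3 : (fun j => momMat μ n j * (e n : ∀ _ : ℕ, ℂ) j)
        = fun j => if j = n then momMat μ n n else 0 := by
      funext j
      by_cases hj : j = n
      · subst hj; simp [he, lp.single_apply_self]
      · simp [he, lp.single_apply_ne _ _ _ hj, hj]
    rw [h3] at h2
    exact h2.unique (hasSum_ite_eq n _)
  -- lower bound on diagonal entries
  have hlow : ∀ n, (μ (Metric.sphere (0 : ℂ) 1)).toReal ≤ ∫ z, ‖z‖ ^ (2 * n) ∂μ := by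
    intro n
    have hms : MeasurableSet (Metric.sphere (0 : ℂ) 1) := Metric.isClosed_sphere.measurableSet
    have hind : Integrable ((Metric.sphere (0 : ℂ) 1).indicator (1 : ℂ → ℝ)) μ :=
      h1.indicator hms
    have hmono : ∀ z : ℂ, (Metric.sphere (0 : ℂ) 1).indicator (1 : ℂ → ℝ) z
        ≤ ‖z‖ ^ (2 * n) := by
      intro z
      by_cases hz : z ∈ Metric.sphere (0 : ℂ) 1
      · have : ‖z‖ = 1 := by simpa using hz
        simp [Set.indicator_of_mem hz, this]
      · simp [Set.indicator_of_notMem hz, pow_nonneg (norm_nonneg z)]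
    calc (μ (Metric.sphere (0 : ℂ) 1)).toReal
        = ∫ z, (Metric.sphere (0 : ℂ) 1).indicator (1 : ℂ → ℝ) z ∂μ := by
          rw [integral_indicator_one hms]; rfl
      _ ≤ ∫ z, ‖z‖ ^ (2 * n) ∂μ := integral_mono hind (hmom (2 * n)) hmono
  -- compactness: find convergent subsequence of K (e n)
  have hbdd : Bornology.IsBounded (Set.range e) := by
    apply (Metric.isBounded_closedBall (x := (0 : lp (fun _ : ℕ => ℂ) 2)) (r := 1)).subset
    rintro - ⟨n, rfl⟩
    simp [Metric.mem_closedBall, dist_zero_right, hnorm_e n]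
  have hcl : IsCompact (closure ((K : lp (fun _ : ℕ => ℂ) 2 →ₗ[ℂ] lp (fun _ : ℕ => ℂ) 2) ''
      Set.range e)) := by
    exact hKc.isCompact_closure_image_of_bounded hbdd
  have hmem : ∀ n, K (e n) ∈ closure ((K : lp (fun _ : ℕ => ℂ) 2 →ₗ[ℂ] lp (fun _ : ℕ => ℂ) 2) ''
      Set.range e) := fun n => subset_closure ⟨e n, Set.mem_range_self n, rfl⟩
  obtain ⟨y, -, φ, hφ, hconv⟩ := hcl.tendsto_subseq hmem
  -- y i → 0
  have hy : Tendsto (fun i => ‖(y : ∀ _ : ℕ, ℂ) i‖) atTop (𝓝 0) := by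
    have hsq : Summable (fun i => ‖(y : ∀ _ : ℕ, ℂ) i‖ ^ (2 : ℝ)) := by
      have h9 := (memℓp_gen_iff (p := 2) (by norm_num)).1 (lp.memℓp y)
      have h10 : ((2 : ENNReal)).toReal = (2 : ℝ) := by norm_num
      rw [h10] at h9
      exact h9
    have h0 : Tendsto (fun i => ‖(y : ∀ _ : ℕ, ℂ) i‖ ^ (2:ℝ)) atTop (𝓝 0) :=
      hsq.tendsto_atTop_zero
    have h11 := h0.rpow_const (p := (2:ℝ)⁻¹) (Or.inr (by norm_num))
    have h12 : ∀ i, (‖(y : ∀ _ : ℕ, ℂ) i‖ ^ (2:ℝ)) ^ ((2:ℝ)⁻¹) = ‖(y : ∀ _ : ℕ, ℂ) i‖ := by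
      intro i
      rw [← Real.rpow_mul (norm_nonneg _)]
      norm_num
    rw [Real.zero_rpow (by norm_num : ((2:ℝ)⁻¹) ≠ 0)] at h11
    exact Filter.Tendsto.congr h12 h11
  -- the bound along the subsequence
  have hbound : ∀ n, (μ (Metric.sphere (0 : ℂ) 1)).toReal
      ≤ ‖K (e (φ n)) - y‖ + ‖(y : ∀ _ : ℕ, ℂ) (φ n)‖ := by
    intro n
    set m := φ n
    have h4 : (μ (Metric.sphere (0 : ℂ) 1)).toReal ≤ ‖(K (e m) : ∀ _ : ℕ, ℂ) m‖ := by
      calc (μ (Metric.sphere (0 : ℂ) 1)).toReal ≤ ∫ z, ‖z‖ ^ (2 * m) ∂μ := hlow m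
        _ ≤ ‖momMat μ m m‖ := by
            rw [momMat_diag, Complex.norm_real, Real.norm_eq_abs]
            exact le_abs_self _
        _ = ‖(K (e m) : ∀ _ : ℕ, ℂ) m‖ := by rw [hdiag]
    have h5 : ‖(K (e m) : ∀ _ : ℕ, ℂ) m‖
        ≤ ‖K (e m) - y‖ + ‖(y : ∀ _ : ℕ, ℂ) m‖ := by
      have h6 : (K (e m) : ∀ _ : ℕ, ℂ) m = ((K (e m) - y : lp (fun _ : ℕ => ℂ) 2) : ∀ _ : ℕ, ℂ) m
          + (y : ∀ _ : ℕ, ℂ) m := by rw [lp.coeFn_sub, Pi.sub_apply, sub_add_cancel]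
      rw [h6]
      exact (norm_add_le _ _).trans (add_le_add_left
        (lp.norm_apply_le_norm two_ne_zero _ m) _)
    exact h4.trans h5
  -- take the limit
  have htend : Tendsto (fun n => ‖K (e (φ n)) - y‖ + ‖(y : ∀ _ : ℕ, ℂ) (φ n)‖) atTop (𝓝 0) := by
    have h7 : Tendsto (fun n => ‖K (e (φ n)) - y‖) atTop (𝓝 0) := by
      have h13 := tendsto_iff_norm_sub_tendsto_zero.mp hconv
      exact h13
    have h8 : Tendsto (fun n => ‖(y : ∀ _ : ℕ, ℂ) (φ n)‖) atTop (𝓝 0) :=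
      hy.comp hφ.tendsto_atTop
    simpa using h7.add h8
  have hle : (μ (Metric.sphere (0 : ℂ) 1)).toReal ≤ 0 := ge_of_tendsto' htend hbound
  have h0 : (μ (Metric.sphere (0 : ℂ) 1)).toReal = 0 :=
    le_antisymm hle ENNReal.toReal_nonneg
  have hne : μ (Metric.sphere (0 : ℂ) 1) ≠ ⊤ :=
    ((measure_mono (Set.subset_univ _)).trans_lt hfin).ne
  exact (ENNReal.toReal_eq_zero_iff _).mp h0 |>.resolve_right hne
end
end
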